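/- Let λ > 0, x ∈ [0,1) and A ∈ [0,1]. There exists an inspection rate α ∈ [0, A] such that the equation θ = (1-x)(1-α)·λθ/(1+λθ) has no positive solution if and only if A ≥ 1 - 1/(λ(1-x)). In words, a planner with budget A can fully eradicate the rumor if and only if A ≥ 1 - 1/(λ(1-x)). -/

import Mathlib

/-- **Budget needed to eradicate the rumor.** For `λ > 0`, `x ∈ [0,1)` and budget
`A ∈ [0,1]`: there exists an inspection rate `α ∈ [0,A]` such that the equation
`θ = (1-x)(1-α)·λθ/(1+λθ)` has no positive solution iff `A ≥ 1 - 1/(λ(1-x))`. -/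
theorem eradication_budget (lam x A : ℝ) (hlam : 0 < lam)
    (hx : x ∈ Set.Ico (0 : ℝ) 1) (hA : A ∈ Set.Icc (0 : ℝ) 1) :
    (∃ α ∈ Set.Icc (0 : ℝ) A,
      ¬∃ θ : ℝ, 0 < θ ∧ θ = (1 - x) * (1 - α) * (lam * θ / (1 + lam * θ))) ↔
      1 - 1 / (lam * (1 - x)) ≤ A := by
  obtain ⟨hx0, hx1⟩ := hx
  obtain ⟨hA0, hA1⟩ := hA
  have h1x : 0 < 1 - x := by linarith
  have hlx : 0 < lam * (1 - x) := by positivity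
  constructor
  · rintro ⟨α, ⟨hα0, hαA⟩, hno⟩
    by_contra hlt
    push_neg at hlt
    -- α ≤ A < 1 - 1/(lam*(1-x)), so (1-x)*(1-α)*lam > 1
    have hα : α < 1 - 1 / (lam * (1 - x)) := lt_of_le_of_lt hαA hlt
    have hc : 1 < (1 - x) * (1 - α) * lam := by
      have h1 : 1 / (lam * (1 - x)) < 1 - α := by linarith
      have := (div_lt_iff₀ hlx).mp h1
      nlinarith
    set c := (1 - x) * (1 - α) with hcdef
    refine hno ⟨(c * lam - 1) / lam, div_pos (by linarith) hlam, ?_⟩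
    have hθ : lam * ((c * lam - 1) / lam) = c * lam - 1 := by
      field_simp
    rw [hθ]
    have hd : (1 : ℝ) + (c * lam - 1) = c * lam := by ring
    rw [hd]
    have hcl : c * lam ≠ 0 := by nlinarith
    have hc0 : c ≠ 0 := left_ne_zero_of_mul hcl
    field_simp
  · intro h
    refine ⟨A, ⟨hA0, le_refl A⟩, ?_⟩
    rintro ⟨θ, hθ, heq⟩
    have hden : 0 < 1 + lam * θ := by nlinarith
    have hc : (1 - x) * (1 - A) * lam ≤ 1 := by
      have h1 : 1 - A ≤ 1 / (lam * (1 - x)) := by linarith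
      have := (le_div_iff₀ hlx).mp h1
      nlinarith
    have heq2 : θ * (1 + lam * θ) = (1 - x) * (1 - A) * (lam * θ) := by
      field_simp at heq
      linear_combination θ * heq
    nlinarith [mul_le_mul_of_nonneg_right hc hθ.le, mul_pos hlam (mul_pos hθ hθ)]
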